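/- Let Φ be an irreducible reduced root system and β a positive short root. Then the length of the reflection s_β satisfies l(s_β) = 2·ht(β) − 1, where ht(β) is the height of β with respect to the simple roots. -/

import Mathlib

open scoped RealInnerProductSpace

set_option maxHeartbeats 1000000

variable {V : Type*} [NormedAddCommGroup V] [InnerProductSpace ℝ V]

/-- An irreducible reduced (crystallographic) root system in a real inner product space. -/
structure IsIrredRootSystem (Φ : Set V) : Prop where
  finite : Φ.Finite
  nonempty : Φ.Nonempty
  nonzero : (0 : V) ∉ Φ
  spanning : Submodule.span ℝ Φ = ⊤
  reflect_mem : ∀ α ∈ Φ, ∀ β ∈ Φ, β - (2 * ⟪α, β⟫ / ⟪α, α⟫) • α ∈ Φ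
  crystallographic : ∀ α ∈ Φ, ∀ β ∈ Φ, ∃ n : ℤ, 2 * ⟪α, β⟫ / ⟪α, α⟫ = (n : ℝ)
  reduced : ∀ α ∈ Φ, ∀ t : ℝ, t • α ∈ Φ → t = 1 ∨ t = -1
  irreducible : ∀ Φ₁ Φ₂ : Set V, Φ₁ ∪ Φ₂ = Φ →
    (∀ α ∈ Φ₁, ∀ β ∈ Φ₂, ⟪α, β⟫ = 0) → Φ₁ = ∅ ∨ Φ₂ = ∅

/-- `Δ` is a base (system of simple roots) for `Φ`: it is contained in `Φ`, linearly
independent, and every root is an integral combination of `Δ` with coefficients all of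
the same sign. -/
def IsBase (Φ : Set V) (Δ : Finset V) : Prop :=
  (Δ : Set V) ⊆ Φ ∧ LinearIndependent ℝ (fun a : Δ => (a : V)) ∧
    ∀ γ ∈ Φ, ∃ c : V → ℤ, γ = ∑ α ∈ Δ, (c α : ℝ) • α ∧
      ((∀ α ∈ Δ, 0 ≤ c α) ∨ (∀ α ∈ Δ, c α ≤ 0))

/-- The positive roots with respect to the base `Δ`. -/
def posRoots (Φ : Set V) (Δ : Finset V) : Set V :=
  {γ ∈ Φ | ∃ c : V → ℕ, γ = ∑ α ∈ Δ, (c α : ℝ) • α}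

/-- The coroot `γ^∨ = 2γ/(γ|γ)` of a root `γ`. -/
noncomputable def coroot (γ : V) : V := (2 / ⟪γ, γ⟫) • γ

/-- The set of reflections in the roots of `Φ`, as linear automorphisms of `V`. -/
def reflections (Φ : Set V) : Set (V ≃ₗ[ℝ] V) :=
  {w | ∃ α ∈ Φ, ∀ v, w v = v - (2 * ⟪α, v⟫ / ⟪α, α⟫) • α}

/-- The Weyl group of `Φ`: the group generated by the reflections in the roots. -/
def weylGroup (Φ : Set V) : Subgroup (V ≃ₗ[ℝ] V) := Subgroup.closure (reflections Φ)

/-- The simple reflections with respect to the base `Δ`. -/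
def simpleReflections (Δ : Finset V) : Set (V ≃ₗ[ℝ] V) :=
  {w | ∃ α ∈ Δ, ∀ v, w v = v - (2 * ⟪α, v⟫ / ⟪α, α⟫) • α}

/-- The length of `w` with respect to the simple reflections determined by `Δ`. -/
noncomputable def len (Δ : Finset V) (w : V ≃ₗ[ℝ] V) : ℕ :=
  sInf {n | ∃ L : List (V ≃ₗ[ℝ] V),
    (∀ s ∈ L, s ∈ simpleReflections Δ) ∧ L.length = n ∧ L.prod = w}

/-- `t` is the highest root of `Φ` with respect to the base `Δ`. -/
def IsHighestRoot (Φ : Set V) (Δ : Finset V) (t : V) : Prop :=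
  t ∈ Φ ∧ ∀ α ∈ Φ, ∃ c : V → ℕ, t - α = ∑ a ∈ Δ, (c a : ℝ) • a

section Aux

lemma ipos {γ : V} (h : γ ≠ 0) : (0:ℝ) < ⟪γ, γ⟫ :=
  real_inner_self_nonneg.lt_of_ne
    (fun e => h ((inner_self_eq_zero (𝕜 := ℝ)).mp e.symm))

/-- Reflection in `γ` preserves the inner product. -/
lemma refl_inner (γ v w : V) :
    ⟪v - (2 * ⟪γ, v⟫ / ⟪γ, γ⟫) • γ, w - (2 * ⟪γ, w⟫ / ⟪γ, γ⟫) • γ⟫ = ⟪v, w⟫ := by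
  by_cases hγ : γ = 0
  · simp [hγ]
  · have hd : ⟪γ, γ⟫ ≠ 0 := by
      simpa using (ipos hγ).ne'
    rw [inner_sub_left, inner_sub_right, inner_sub_right, real_inner_smul_left,
      real_inner_smul_left, real_inner_smul_right, real_inner_smul_right,
      real_inner_comm v γ]
    field_simp
    ring

lemma refl_invol (γ v : V) :
    (v - (2 * ⟪γ, v⟫ / ⟪γ, γ⟫) • γ) -
      (2 * ⟪γ, v - (2 * ⟪γ, v⟫ / ⟪γ, γ⟫) • γ⟫ / ⟪γ, γ⟫) • γ = v := by
  by_cases hγ : γ = 0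
  · simp [hγ]
  · have hd : ⟪γ, γ⟫ ≠ 0 := (ipos hγ).ne'
    rw [inner_sub_right, real_inner_smul_right]
    have : 2 * (⟪γ, v⟫ - 2 * ⟪γ, v⟫ / ⟪γ, γ⟫ * ⟪γ, γ⟫) / ⟪γ, γ⟫
        = - (2 * ⟪γ, v⟫ / ⟪γ, γ⟫) := by field_simp; ring
    rw [this, neg_smul, sub_neg_eq_add, sub_add_cancel]

/-- The reflection in `γ` as a linear automorphism. -/
noncomputable def rE (γ : V) : V ≃ₗ[ℝ] V where
  toFun v := v - (2 * ⟪γ, v⟫ / ⟪γ, γ⟫) • γ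
  invFun v := v - (2 * ⟪γ, v⟫ / ⟪γ, γ⟫) • γ
  map_add' v w := by
    rw [inner_add_right]
    rw [show 2 * (⟪γ, v⟫ + ⟪γ, w⟫) / ⟪γ, γ⟫
      = 2 * ⟪γ, v⟫ / ⟪γ, γ⟫ + 2 * ⟪γ, w⟫ / ⟪γ, γ⟫ by ring]
    rw [add_smul]; abel
  map_smul' t v := by
    rw [real_inner_smul_right]
    rw [show 2 * (t * ⟪γ, v⟫) / ⟪γ, γ⟫ = t * (2 * ⟪γ, v⟫ / ⟪γ, γ⟫) by ring]
    simp [smul_sub, smul_smul]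
  left_inv v := refl_invol γ v
  right_inv v := refl_invol γ v

lemma rE_apply (γ v : V) : rE γ v = v - (2 * ⟪γ, v⟫ / ⟪γ, γ⟫) • γ := rfl

lemma rE_rE (γ v : V) : rE γ (rE γ v) = v := refl_invol γ v

lemma rE_inner (γ v w : V) : ⟪rE γ v, rE γ w⟫ = ⟪v, w⟫ := refl_inner γ v w

lemma rE_self {γ : V} (hγ : γ ≠ 0) : rE γ γ = -γ := by
  have hd : ⟪γ, γ⟫ ≠ 0 := (ipos hγ).ne'
  rw [rE_apply]
  rw [show 2 * ⟪γ, γ⟫ / ⟪γ, γ⟫ = 2 by field_simp]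
  rw [two_smul]; abel

lemma rE_neg_self {γ : V} (hγ : γ ≠ 0) : rE γ (-γ) = γ := by
  have := rE_self hγ
  have h2 := rE_rE γ γ
  rw [this] at h2; exact h2

lemma rE_selfadj (γ x y : V) : ⟪rE γ x, y⟫ = ⟪x, rE γ y⟫ := by
  by_cases hγ : γ = 0
  · simp [rE_apply, hγ]
  · have hd : ⟪γ, γ⟫ ≠ 0 := (ipos hγ).ne'
    rw [rE_apply, rE_apply, inner_sub_left, inner_sub_right, real_inner_smul_left,
      real_inner_smul_right, real_inner_comm γ x]
    ring

/-- Conjugation formula: `s_a s_γ s_a = s_{s_a γ}`. -/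
lemma rE_conj (a γ : V) : rE a * rE γ * rE a = rE (rE a γ) := by
  apply LinearEquiv.ext
  intro v
  have h1 : (rE a * rE γ * rE a) v = rE a (rE γ (rE a v)) := rfl
  rw [h1]
  have hg : ⟪rE a γ, rE a γ⟫ = ⟪γ, γ⟫ := rE_inner a γ γ
  have hgv : ⟪γ, rE a v⟫ = ⟪rE a γ, v⟫ := (rE_selfadj a γ v).symm ▸ rfl
  rw [rE_apply γ, map_sub, map_smul, rE_rE, rE_apply (rE a γ) v, hg]
  rw [rE_selfadj a γ v]

end Aux

section RS

variable {Φ : Set V} {Δ : Finset V}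

lemma root_ne_zero (hΦ : IsIrredRootSystem Φ) {γ : V} (hγ : γ ∈ Φ) : γ ≠ 0 :=
  fun h => hΦ.nonzero (h ▸ hγ)

lemma root_ipos (hΦ : IsIrredRootSystem Φ) {γ : V} (hγ : γ ∈ Φ) : (0:ℝ) < ⟪γ, γ⟫ :=
  ipos (root_ne_zero hΦ hγ)

lemma rE_root_mem (hΦ : IsIrredRootSystem Φ) {a γ : V} (ha : a ∈ Φ) (hγ : γ ∈ Φ) :
    rE a γ ∈ Φ := hΦ.reflect_mem a ha γ hγ

lemma neg_root_mem (hΦ : IsIrredRootSystem Φ) {γ : V} (hγ : γ ∈ Φ) : -γ ∈ Φ := by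
  have := hΦ.reflect_mem γ hγ γ hγ
  rwa [← rE_apply, rE_self (root_ne_zero hΦ hγ)] at this

/-- `f` takes a nonzero integer value on each root. -/
lemma f_root_int (hΦ : IsIrredRootSystem Φ) (hΔ : IsBase Φ Δ)
    (f : V →ₗ[ℝ] ℝ) (hf : ∀ a ∈ Δ, f a = 1) {γ : V} (hγ : γ ∈ Φ) :
    ∃ k : ℤ, f γ = (k : ℝ) ∧ k ≠ 0 ∧ (0 < k → γ ∈ posRoots Φ Δ) := by
  obtain ⟨c, hc, hsign⟩ := hΔ.2.2 γ hγ
  have hfγ : f γ = ((∑ a ∈ Δ, c a : ℤ) : ℝ) := by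
    rw [hc, map_sum]
    push_cast
    refine Finset.sum_congr rfl fun a haΔ => ?_
    rw [map_smul, hf a haΔ]
    simp
  refine ⟨∑ a ∈ Δ, c a, hfγ, ?_, ?_⟩
  · intro h0
    rcases hsign with hpos | hneg
    · have : ∀ a ∈ Δ, c a = 0 := (Finset.sum_eq_zero_iff_of_nonneg hpos).mp h0
      apply root_ne_zero hΦ hγ
      rw [hc]
      exact Finset.sum_eq_zero fun a haΔ => by rw [this a haΔ]; simp
    · have h0' : ∑ a ∈ Δ, -c a = 0 := by
        rw [Finset.sum_neg_distrib, h0, neg_zero]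
      have : ∀ a ∈ Δ, -c a = 0 :=
        (Finset.sum_eq_zero_iff_of_nonneg (fun a haΔ => by
          simpa using hneg a haΔ)).mp h0'
      apply root_ne_zero hΦ hγ
      rw [hc]
      exact Finset.sum_eq_zero fun a haΔ => by
        have := this a haΔ; have : c a = 0 := by omega
        rw [this]; simp
  · intro hk
    rcases hsign with hpos | hneg
    · exact ⟨hγ, fun a => (c a).toNat, by
        rw [hc]
        refine Finset.sum_congr rfl fun a haΔ => ?_
        congr 1
        exact_mod_cast (Int.toNat_of_nonneg (hpos a haΔ)).symm⟩
    · exfalso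
      have : ∑ a ∈ Δ, c a ≤ 0 := Finset.sum_nonpos hneg
      omega

lemma f_pos_root (hΦ : IsIrredRootSystem Φ) (hΔ : IsBase Φ Δ)
    (f : V →ₗ[ℝ] ℝ) (hf : ∀ a ∈ Δ, f a = 1) {γ : V} (hγ : γ ∈ posRoots Φ Δ) :
    ∃ n : ℕ, 0 < n ∧ f γ = (n : ℝ) := by
  obtain ⟨k, hk, hk0, _⟩ := f_root_int hΦ hΔ f hf hγ.1
  obtain ⟨c, hc⟩ := hγ.2
  have hfγ : f γ = ((∑ a ∈ Δ, c a : ℕ) : ℝ) := by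
    rw [hc, map_sum]
    push_cast
    refine Finset.sum_congr rfl fun a haΔ => ?_
    rw [map_smul, hf a haΔ]
    simp
  refine ⟨∑ a ∈ Δ, c a, ?_, hfγ⟩
  have : (k : ℝ) = ((∑ a ∈ Δ, c a : ℕ) : ℝ) := by rw [← hk, hfγ]
  have hkn : k = (∑ a ∈ Δ, c a : ℕ) := by exact_mod_cast this
  omega

/-- Key pairing bound: if `δ` is at most as long as `a` and `δ ≠ ±a`, then
`⟨δ, a^∨⟩ ∈ {-1, 0, 1}`. -/
lemma pairing_bound (hΦ : IsIrredRootSystem Φ) {δ a : V} (hδ : δ ∈ Φ) (ha : a ∈ Φ)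
    (hsh : ⟪δ, δ⟫ ≤ ⟪a, a⟫) (h1 : δ ≠ a) (h2 : δ ≠ -a) :
    ∃ m : ℤ, 2 * ⟪a, δ⟫ / ⟪a, a⟫ = (m : ℝ) ∧ |m| ≤ 1 := by
  obtain ⟨m, hm⟩ := hΦ.crystallographic a ha δ hδ
  obtain ⟨n, hn⟩ := hΦ.crystallographic δ hδ a ha
  have hda : (0:ℝ) < ⟪a, a⟫ := root_ipos hΦ ha
  have hdd : (0:ℝ) < ⟪δ, δ⟫ := root_ipos hΦ hδ
  have hsym : ⟪δ, a⟫ = ⟪a, δ⟫ := (real_inner_comm δ a).symm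
  have hm' : (m : ℝ) * ⟪a, a⟫ = 2 * ⟪a, δ⟫ := by
    field_simp at hm; linarith [hm]
  rw [hsym] at hn
  have hn' : (n : ℝ) * ⟪δ, δ⟫ = 2 * ⟪a, δ⟫ := by
    field_simp at hn; linarith [hn]
  refine ⟨m, hm, ?_⟩
  by_contra hcon
  push_neg at hcon
  -- |m| ≥ 2
  have habs : 2 ≤ |m| := hcon
  -- |m| ≤ |n|
  have hmn_le : |(m:ℝ)| * ⟪a,a⟫ = |(n:ℝ)| * ⟪δ,δ⟫ := by
    have : |(m:ℝ) * ⟪a,a⟫| = |(n:ℝ) * ⟪δ,δ⟫| := by rw [hm', hn']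
    rwa [abs_mul, abs_mul, abs_of_pos hda, abs_of_pos hdd] at this
  have habs_le : |(m:ℝ)| ≤ |(n:ℝ)| := by
    nlinarith [abs_nonneg (m:ℝ), abs_nonneg (n:ℝ)]
  have habs_le' : |m| ≤ |n| := by
    rw [← Int.cast_abs, ← Int.cast_abs] at habs_le
    exact_mod_cast habs_le
  -- product m*n ≤ 4 from Cauchy–Schwarz
  have hcs : ⟪a, δ⟫ * ⟪a, δ⟫ ≤ ⟪a, a⟫ * ⟪δ, δ⟫ := real_inner_mul_inner_self_le a δ
  have hAD : (0:ℝ) < ⟪a,a⟫ * ⟪δ,δ⟫ := mul_pos hda hdd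
  have hprod : (m : ℝ) * n * (⟪a,a⟫ * ⟪δ,δ⟫) = 4 * (⟪a,δ⟫ * ⟪a,δ⟫) := by
    have : ((m:ℝ) * ⟪a,a⟫) * ((n:ℝ) * ⟪δ,δ⟫) = (2*⟪a,δ⟫) * (2*⟪a,δ⟫) := by
      rw [hm', hn']
    nlinarith [this]
  have hmn4 : (m : ℝ) * n ≤ 4 := by nlinarith
  have hmn0 : (0:ℝ) ≤ (m:ℝ) * n := by nlinarith [sq_nonneg (⟪a,δ⟫ : ℝ), mul_self_nonneg (⟪a,δ⟫ : ℝ)]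
  have hmn4' : m * n ≤ 4 := by exact_mod_cast hmn4
  have hmn0' : 0 ≤ m * n := by exact_mod_cast hmn0
  have hn2 : 2 ≤ |n| := le_trans habs habs_le'
  have habs4 : |m| * |n| ≤ 4 := by
    rw [← abs_mul, abs_of_nonneg hmn0']; exact hmn4'
  have hm2abs : |m| = 2 := le_antisymm (by nlinarith) habs
  have hn2abs : |n| = 2 := le_antisymm (by nlinarith) hn2
  have hmeq : m = n := by
    rcases (abs_eq (by norm_num : (0:ℤ) ≤ 2)).mp hm2abs with h | h <;>
    rcases (abs_eq (by norm_num : (0:ℤ) ≤ 2)).mp hn2abs with h' | h' <;>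
      subst h <;> subst h' <;> first | rfl | (exfalso; norm_num at hmn0')
  have hm2 : m = 2 ∨ m = -2 := (abs_eq (by norm_num : (0:ℤ) ≤ 2)).mp hm2abs
  rcases hm2 with h2' | h2'
  · -- m = n = 2 : δ = a
    apply h1
    have hia : ⟪a, δ⟫ = ⟪a, a⟫ := by rw [h2'] at hm'; push_cast at hm'; linarith
    have hid : ⟪a, δ⟫ = ⟪δ, δ⟫ := by rw [← hmeq, h2'] at hn'; push_cast at hn'; linarith
    have : ⟪δ - a, δ - a⟫ = (0:ℝ) := by
      rw [inner_sub_left, inner_sub_right, inner_sub_right, hsym]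
      linarith [hia, hid]
    have := (inner_self_eq_zero (𝕜 := ℝ)).mp this
    rwa [sub_eq_zero] at this
  · -- m = n = -2 : δ = -a
    apply h2
    have hia : ⟪a, δ⟫ = -⟪a, a⟫ := by rw [h2'] at hm'; push_cast at hm'; linarith
    have hid : ⟪a, δ⟫ = -⟪δ, δ⟫ := by rw [← hmeq, h2'] at hn'; push_cast at hn'; linarith
    have : ⟪δ + a, δ + a⟫ = (0:ℝ) := by
      rw [inner_add_left, inner_add_right, inner_add_right, hsym]
      linarith [hia, hid]
    have := (inner_self_eq_zero (𝕜 := ℝ)).mp this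
    rw [add_eq_zero_iff_eq_neg] at this
    exact this

end RS

section Orbit

variable {Φ : Set V}

/-- Membership in the Weyl orbit of `α` (generated by reflections in roots). -/
inductive Orb (Φ : Set V) (α : V) : V → Prop where
  | base : Orb Φ α α
  | step (γ u : V) (hγ : γ ∈ Φ) (hu : Orb Φ α u) :
      Orb Φ α (u - (2 * ⟪γ, u⟫ / ⟪γ, γ⟫) • γ)

lemma orb_mem (hΦ : IsIrredRootSystem Φ) {α v : V} (hα : α ∈ Φ) (h : Orb Φ α v) :
    v ∈ Φ := by
  induction h with
  | base => exact hα
  | step γ u hγ hu ih => exact hΦ.reflect_mem γ hγ u ih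

lemma orb_norm {α v : V} (h : Orb Φ α v) : ⟪v, v⟫ = ⟪α, α⟫ := by
  induction h with
  | base => rfl
  | step γ u hγ hu ih => rw [refl_inner γ u u]; exact ih

/-- In an irreducible root system, every root has a Weyl-conjugate of `α`
not orthogonal to it. -/
lemma exists_conj (hΦ : IsIrredRootSystem Φ) {α x : V} (hα : α ∈ Φ) (hx : x ∈ Φ) :
    ∃ u ∈ Φ, ⟪u, u⟫ = ⟪α, α⟫ ∧ ⟪u, x⟫ ≠ 0 := by
  classical
  set O : Set V := {v | Orb Φ α v} with hO
  set Φ₁ : Set V := {g ∈ Φ | g ∈ Submodule.span ℝ O} with hΦ₁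
  set Φ₂ : Set V := {g ∈ Φ | ∀ u, Orb Φ α u → ⟪g, u⟫ = 0} with hΦ₂
  have hdich : ∀ g ∈ Φ, g ∈ Φ₁ ∨ g ∈ Φ₂ := by
    intro g hg
    by_cases hgs : g ∈ Submodule.span ℝ O
    · exact Or.inl ⟨hg, hgs⟩
    · refine Or.inr ⟨hg, fun u hu => ?_⟩
      have h1 : u ∈ Submodule.span ℝ O := Submodule.subset_span hu
      have h2 : u - (2 * ⟪g, u⟫ / ⟪g, g⟫) • g ∈ Submodule.span ℝ O :=
        Submodule.subset_span (Orb.step g u hg hu)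
      have h3 : (2 * ⟪g, u⟫ / ⟪g, g⟫) • g ∈ Submodule.span ℝ O := by
        have := Submodule.sub_mem _ h1 h2
        simpa using this
      have hc0 : 2 * ⟪g, u⟫ / ⟪g, g⟫ = 0 := by
        by_contra hc
        exact hgs (by
          have := Submodule.smul_mem _ (2 * ⟪g, u⟫ / ⟪g, g⟫)⁻¹ h3
          rwa [smul_smul, inv_mul_cancel₀ hc, one_smul] at this)
      have hgg : ⟪g, g⟫ ≠ 0 := (root_ipos hΦ hg).ne'
      field_simp at hc0
      linarith [hc0]
  have hunion : Φ₁ ∪ Φ₂ = Φ := by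
    apply Set.Subset.antisymm
    · rintro g (hg | hg) <;> exact hg.1
    · intro g hg; exact hdich g hg
  have horth : ∀ g₁ ∈ Φ₁, ∀ g₂ ∈ Φ₂, ⟪g₁, g₂⟫ = 0 := by
    rintro g₁ ⟨-, hg₁s⟩ g₂ ⟨hg₂, hg₂o⟩
    clear hdich hunion
    induction hg₁s using Submodule.span_induction with
    | mem v hv => rw [real_inner_comm]; exact hg₂o v hv
    | zero => simp
    | add v w _ _ ihv ihw => rw [inner_add_left, ihv, ihw]; simp
    | smul t v _ ihv => rw [real_inner_smul_left, ihv]; simp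
  rcases hΦ.irreducible Φ₁ Φ₂ hunion horth with h1 | h1
  · exfalso
    have : α ∈ Φ₁ := ⟨hα, Submodule.subset_span Orb.base⟩
    rw [h1] at this; exact this
  · have hx2 : x ∉ Φ₂ := by rw [h1]; exact Set.notMem_empty x
    have : ¬ (∀ u, Orb Φ α u → ⟪x, u⟫ = 0) := fun hcon => hx2 ⟨hx, hcon⟩
    push_neg at this
    obtain ⟨u, hu, hu0⟩ := this
    exact ⟨u, orb_mem hΦ hα hu, orb_norm hu, by rwa [real_inner_comm] at hu0⟩

/-- The possible ratios of squared lengths of two roots. -/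
lemma ratio_lemma (hΦ : IsIrredRootSystem Φ) {x y : V} (hx : x ∈ Φ) (hy : y ∈ Φ)
    (h : ⟪x, x⟫ < ⟪y, y⟫) : ⟪y, y⟫ = 2 * ⟪x, x⟫ ∨ ⟪y, y⟫ = 3 * ⟪x, x⟫ := by
  obtain ⟨u, hu, hunorm, hux⟩ := exists_conj hΦ hy hx
  have hdx : (0:ℝ) < ⟪x, x⟫ := root_ipos hΦ hx
  have hdu : (0:ℝ) < ⟪u, u⟫ := root_ipos hΦ hu
  obtain ⟨m, hm⟩ := hΦ.crystallographic x hx u hu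
  obtain ⟨n, hn⟩ := hΦ.crystallographic u hu x hx
  have hsym : ⟪u, x⟫ = ⟪x, u⟫ := (real_inner_comm u x).symm
  rw [hsym] at hn
  have hm' : (m : ℝ) * ⟪x, x⟫ = 2 * ⟪x, u⟫ := by field_simp at hm; linarith [hm]
  have hn' : (n : ℝ) * ⟪u, u⟫ = 2 * ⟪x, u⟫ := by field_simp at hn; linarith [hn]
  have hxu : ⟪x, u⟫ ≠ 0 := by rwa [hsym] at hux
  have hm0 : m ≠ 0 := by
    rintro rfl; push_cast at hm'; apply hxu; linarith
  have hn0 : n ≠ 0 := by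
    rintro rfl; push_cast at hn'; apply hxu; linarith
  have hcs : ⟪x, u⟫ * ⟪x, u⟫ ≤ ⟪x, x⟫ * ⟪u, u⟫ := real_inner_mul_inner_self_le x u
  have hprod : (m : ℝ) * n * (⟪x,x⟫ * ⟪u,u⟫) = 4 * (⟪x,u⟫ * ⟪x,u⟫) := by
    have : ((m:ℝ) * ⟪x,x⟫) * ((n:ℝ) * ⟪u,u⟫) = (2*⟪x,u⟫) * (2*⟪x,u⟫) := by
      rw [hm', hn']
    nlinarith [this]
  have hAD : (0:ℝ) < ⟪x,x⟫ * ⟪u,u⟫ := mul_pos hdx hdu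
  have hmn4 : (m : ℝ) * n ≤ 4 := by nlinarith
  have hmn0 : (0:ℝ) ≤ (m:ℝ) * n := by nlinarith [mul_self_nonneg (⟪x,u⟫ : ℝ)]
  have hmn4' : m * n ≤ 4 := by exact_mod_cast hmn4
  have hmn0' : 0 ≤ m * n := by exact_mod_cast hmn0
  -- |m| > |n| since ⟪u,u⟫ > ⟪x,x⟫
  have hmn_le : |(m:ℝ)| * ⟪x,x⟫ = |(n:ℝ)| * ⟪u,u⟫ := by
    have : |(m:ℝ) * ⟪x,x⟫| = |(n:ℝ) * ⟪u,u⟫| := by rw [hm', hn']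
    rwa [abs_mul, abs_mul, abs_of_pos hdx, abs_of_pos hdu] at this
  have hyx : ⟪x,x⟫ < ⟪u,u⟫ := hunorm ▸ h
  have hnabs_pos : (0:ℝ) < |(n:ℝ)| := by
    simpa using abs_pos.mpr (by exact_mod_cast hn0 : (n:ℝ) ≠ 0)
  have habs_lt : |(n:ℝ)| < |(m:ℝ)| := by nlinarith
  have habs_lt' : |n| < |m| := by
    rw [← Int.cast_abs, ← Int.cast_abs] at habs_lt
    exact_mod_cast habs_lt
  -- rule out m*n = 4 (would force u = ±2x)
  have h1n : 1 ≤ |n| := Int.one_le_abs hn0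
  have hmn_ne4 : m * n ≠ 4 := by
    intro h4
    have habs4 : |m| * |n| = 4 := by
      rw [← abs_mul, h4]; norm_num
    have hnlt2 : |n| < 2 := by nlinarith [habs_lt', h1n, habs4]
    have hn1 : |n| = 1 := by omega
    rw [hn1, mul_one] at habs4
    have hmm : m = 4 ∨ m = -4 := (abs_eq (by norm_num : (0:ℤ) ≤ 4)).mp habs4
    have hnn : n = 1 ∨ n = -1 := (abs_eq (by norm_num : (0:ℤ) ≤ 1)).mp hn1
    rcases hmm with rfl | rfl <;> rcases hnn with rfl | rfl
    · -- m=4, n=1 : u = 2x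
      push_cast at hm' hn'
      have hzero : ⟪u - (2:ℝ) • x, u - (2:ℝ) • x⟫ = 0 := by
        simp only [inner_sub_left, inner_sub_right, real_inner_smul_left,
          real_inner_smul_right, real_inner_comm u x]
        nlinarith [hm', hn']
      have := (inner_self_eq_zero (𝕜 := ℝ)).mp hzero
      rw [sub_eq_zero] at this
      have : (2:ℝ) • x ∈ Φ := this ▸ hu
      rcases hΦ.reduced x hx 2 this with h' | h' <;> norm_num at h'
    · exfalso; omega
    · exfalso; omega
    · -- m=-4, n=-1 : u = -2x
      push_cast at hm' hn'
      have hzero : ⟪u + (2:ℝ) • x, u + (2:ℝ) • x⟫ = 0 := by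
        simp only [inner_add_left, inner_add_right, real_inner_smul_left,
          real_inner_smul_right, real_inner_comm u x]
        nlinarith [hm', hn']
      have := (inner_self_eq_zero (𝕜 := ℝ)).mp hzero
      have hux2 : u = -((2:ℝ) • x) := by
        rwa [add_eq_zero_iff_eq_neg] at this
      have : (-2:ℝ) • x ∈ Φ := by
        rw [show (-2:ℝ) • x = -((2:ℝ) • x) by simp]; exact hux2 ▸ hu
      rcases hΦ.reduced x hx (-2) this with h' | h' <;> norm_num at h'
  have hmn123 : m * n = 1 ∨ m * n = 2 ∨ m * n = 3 := by
    have h1mn : 1 ≤ m * n := by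
      rcases hmn0'.lt_or_eq with h' | h'
      · omega
      · exfalso
        rcases mul_eq_zero.mp h'.symm with h'' | h''
        · exact hm0 h''
        · exact hn0 h''
    omega
  have hnn : n = 1 ∨ n = -1 := by
    by_cases hcon : |n| = 1
    · exact (abs_eq (by norm_num : (0:ℤ) ≤ 1)).mp hcon
    · exfalso
      have h2n : 2 ≤ |n| := by omega
      have h3m : 3 ≤ |m| := by omega
      have h6 : 6 ≤ |m| * |n| := by nlinarith
      rw [← abs_mul, abs_of_nonneg hmn0'] at h6
      omega
  have hratio : ⟪u,u⟫ = ((m * n : ℤ) : ℝ) * ⟪x,x⟫ := by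
    rcases hnn with rfl | rfl <;> push_cast at hn' hm' ⊢ <;> linarith [hm', hn']
  rw [← hunorm] at h ⊢
  rcases hmn123 with h' | h' | h' <;> rw [h'] at hratio <;> push_cast at hratio
  · exfalso; linarith
  · left; linarith
  · right; linarith

/-- A short root is at most as long as every root. -/
lemma short_min (hΦ : IsIrredRootSystem Φ) {β : V} (hβ : β ∈ Φ)
    {r : ℝ} (hr : IsGreatest {x : ℝ | ∃ α ∈ Φ, x = ⟪α, α⟫} r) (hβsh : ⟪β, β⟫ ≠ r) :
    ∀ a ∈ Φ, ⟪β, β⟫ ≤ ⟪a, a⟫ := by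
  intro a ha
  by_contra hcon
  push_neg at hcon
  obtain ⟨ρ, hρ, hρr⟩ := hr.1
  have hβr : ⟪β, β⟫ ≤ r := hr.2 ⟨β, hβ, rfl⟩
  have hβρ : ⟪β, β⟫ < ⟪ρ, ρ⟫ := by
    rw [← hρr]; exact lt_of_le_of_ne hβr hβsh
  have haβ : ⟪a, a⟫ < ⟪β, β⟫ := hcon
  have haρ : ⟪a, a⟫ < ⟪ρ, ρ⟫ := lt_trans haβ hβρ
  have ha0 : (0:ℝ) < ⟪a, a⟫ := root_ipos hΦ ha
  rcases ratio_lemma hΦ ha hβ haβ with h1 | h1 <;>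
  rcases ratio_lemma hΦ hβ hρ hβρ with h2 | h2 <;>
  rcases ratio_lemma hΦ ha hρ haρ with h3 | h3 <;>
    rw [h1] at h2 <;> rw [h2] at h3 <;> nlinarith

end Orbit

section Main

variable {Φ : Set V} {Δ : Finset V}

lemma simple_eq_rE {t : V ≃ₗ[ℝ] V} (ht : t ∈ simpleReflections Δ) :
    ∃ a ∈ Δ, t = rE a := by
  obtain ⟨a, ha, hform⟩ := ht
  exact ⟨a, ha, LinearEquiv.ext fun v => by rw [hform v, rE_apply]⟩

lemma rE_mem_simple {a : V} (ha : a ∈ Δ) : rE a ∈ simpleReflections Δ :=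
  ⟨a, ha, fun v => rfl⟩

lemma prod_root_mem (hΦ : IsIrredRootSystem Φ) (hΔ : IsBase Φ Δ)
    (L : List (V ≃ₗ[ℝ] V)) (hL : ∀ t ∈ L, t ∈ simpleReflections Δ)
    {γ : V} (hγ : γ ∈ Φ) :
    L.prod γ ∈ Φ ∧ ⟪L.prod γ, L.prod γ⟫ = ⟪γ, γ⟫ := by
  induction L with
  | nil => exact ⟨hγ, rfl⟩
  | cons t L ih =>
    have hrest := ih (fun u hu => hL u (List.mem_cons_of_mem t hu))
    obtain ⟨a, haΔ, rfl⟩ := simple_eq_rE (hL t List.mem_cons_self)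
    have h1 : (rE a :: L).prod γ = rE a (L.prod γ) := by
      rw [List.prod_cons]; rfl
    rw [h1]
    exact ⟨rE_root_mem hΦ (hΔ.1 haΔ) hrest.1, by rw [rE_inner]; exact hrest.2⟩

/-- Key lower bound lemma: height tracking along a word. -/
lemma lower_key (hΦ : IsIrredRootSystem Φ) (hΔ : IsBase Φ Δ)
    (f : V →ₗ[ℝ] ℝ) (hf : ∀ a ∈ Δ, f a = 1)
    {γ : V} (hγ : γ ∈ Φ) (hmin : ∀ a ∈ Φ, ⟪γ, γ⟫ ≤ ⟪a, a⟫) :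
    ∀ L : List (V ≃ₗ[ℝ] V), (∀ t ∈ L, t ∈ simpleReflections Δ) →
      (f (L.prod γ) < 0 → f γ - f (L.prod γ) - 1 ≤ (L.length : ℝ)) ∧
      (0 < f (L.prod γ) → f γ - f (L.prod γ) ≤ (L.length : ℝ)) := by
  obtain ⟨kγ, hkγ, hkγ0, -⟩ := f_root_int hΦ hΔ f hf hγ
  intro L
  induction L with
  | nil =>
    intro _
    constructor <;> intro <;> simp <;> linarith
  | cons t L ih =>
    intro hL
    have hLrest : ∀ u ∈ L, u ∈ simpleReflections Δ :=
      fun u hu => hL u (List.mem_cons_of_mem t hu)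
    obtain ⟨ihneg, ihpos⟩ := ih hLrest
    obtain ⟨a, haΔ, rfl⟩ := simple_eq_rE (hL t List.mem_cons_self)
    set δ := L.prod γ with hδdef
    obtain ⟨hδΦ, hδnorm⟩ := prod_root_mem hΦ hΔ L hLrest hγ
    have haΦ : a ∈ Φ := hΔ.1 haΔ
    have ha0 : a ≠ 0 := root_ne_zero hΦ haΦ
    have hfa : f a = 1 := hf a haΔ
    have h1 : (rE a :: L).prod γ = rE a δ := by rw [List.prod_cons]; rfl
    have htΦ : rE a δ ∈ Φ := rE_root_mem hΦ haΦ hδΦ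
    obtain ⟨kδ, hkδ, hkδ0, -⟩ := f_root_int hΦ hΔ f hf hδΦ
    obtain ⟨kt, hkt, hkt0, -⟩ := f_root_int hΦ hΔ f hf htΦ
    have hft : f (rE a δ) = f δ - (2 * ⟪a, δ⟫ / ⟪a, a⟫) := by
      rw [rE_apply, map_sub, map_smul, smul_eq_mul, hfa, mul_one]
    have hlen : ((rE a :: L).length : ℝ) = (L.length : ℝ) + 1 := by
      rw [List.length_cons]; push_cast; ring
    -- convert IH to integer form
    have ihZ1 : kδ < 0 → kγ - kδ - 1 ≤ (L.length : ℤ) := by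
      intro h
      have : f δ < 0 := by rw [hkδ]; exact_mod_cast h
      have := ihneg this
      rw [hkγ, hkδ] at this
      exact_mod_cast this
    have ihZ2 : 0 < kδ → kγ - kδ ≤ (L.length : ℤ) := by
      intro h
      have : (0:ℝ) < f δ := by rw [hkδ]; exact_mod_cast h
      have := ihpos this
      rw [hkγ, hkδ] at this
      exact_mod_cast this
    rw [h1, hlen, hkγ, hkt]
    -- goal reduction to integers
    have goal1 : (kγ - kt - 1 ≤ (L.length : ℤ) + 1) →
        ((kγ:ℝ) - (kt:ℝ) - 1 ≤ (L.length : ℝ) + 1) := by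
      intro h; exact_mod_cast h
    have goal2 : (kγ - kt ≤ (L.length : ℤ) + 1) →
        ((kγ:ℝ) - (kt:ℝ) ≤ (L.length : ℝ) + 1) := by
      intro h; exact_mod_cast h
    by_cases hda : δ = a
    · -- jump 1 → -1
      have hkδ1 : kδ = 1 := by
        have : f δ = 1 := by rw [hda, hfa]
        rw [hkδ] at this; exact_mod_cast this
      have htv : rE a δ = -a := by rw [hda]; exact rE_self ha0
      have hkt1 : kt = -1 := by
        have : f (rE a δ) = -1 := by rw [htv, map_neg, hfa]
        rw [hkt] at this; exact_mod_cast this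
      constructor
      · intro _
        apply goal1
        have := ihZ2 (by omega)
        omega
      · intro hp
        exfalso
        have : 0 < kt := by exact_mod_cast hp
        omega
    · by_cases hda' : δ = -a
      · -- jump -1 → 1
        have hkδ1 : kδ = -1 := by
          have : f δ = -1 := by rw [hda', map_neg, hfa]
          rw [hkδ] at this; exact_mod_cast this
        have htv : rE a δ = a := by rw [hda']; exact rE_neg_self ha0
        have hkt1 : kt = 1 := by
          have : f (rE a δ) = 1 := by rw [htv, hfa]
          rw [hkt] at this; exact_mod_cast this
        constructor
        · intro hn
          exfalso
          have : kt < 0 := by exact_mod_cast hn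
          omega
        · intro _
          apply goal2
          have := ihZ1 (by omega)
          omega
      · -- generic small step
        obtain ⟨m, hmv, hmabs⟩ := pairing_bound hΦ hδΦ haΦ
          (by rw [hδnorm]; exact hmin a haΦ) hda hda'
        have hktval : kt = kδ - m := by
          have : (kt : ℝ) = (kδ : ℝ) - (m : ℝ) := by
            rw [← hkt, ← hkδ, ← hmv, hft]
          exact_mod_cast this
        have hm1 : -1 ≤ m ∧ m ≤ 1 := abs_le.mp hmabs
        rcases lt_trichotomy kδ 0 with hsgn | hsgn | hsgn
        · have hih := ihZ1 hsgn
          constructor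
          · intro _; apply goal1; omega
          · intro hp
            have hktpos : 0 < kt := by exact_mod_cast hp
            apply goal2; omega
        · exact absurd hsgn hkδ0
        · have hih := ihZ2 hsgn
          constructor
          · intro hn
            have hktneg : kt < 0 := by exact_mod_cast hn
            apply goal1; omega
          · intro _; apply goal2; omega

end Main

section Upper

variable {Φ : Set V} {Δ : Finset V}

/-- Upper bound: a word of length `2n-1` representing the reflection of a short
positive root of height `n`. -/
lemma upper_key (hΦ : IsIrredRootSystem Φ) (hΔ : IsBase Φ Δ)
    (f : V →ₗ[ℝ] ℝ) (hf : ∀ a ∈ Δ, f a = 1) :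
    ∀ n : ℕ, ∀ γ, γ ∈ posRoots Φ Δ → (∀ a ∈ Φ, ⟪γ, γ⟫ ≤ ⟪a, a⟫) → f γ = (n : ℝ) →
      ∃ L : List (V ≃ₗ[ℝ] V), (∀ t ∈ L, t ∈ simpleReflections Δ) ∧
        L.length = 2 * n - 1 ∧ L.prod = rE γ := by
  intro n
  induction n using Nat.strong_induction_on with
  | _ n ih =>
    classical
    intro γ hγ hmin hfγ
    have hγΦ : γ ∈ Φ := hγ.1
    obtain ⟨n', hn'pos, hfn'⟩ := f_pos_root hΦ hΔ f hf hγ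
    have hnn' : n = n' := by
      have : ((n:ℕ):ℝ) = ((n':ℕ):ℝ) := by rw [← hfγ, hfn']
      exact_mod_cast this
    subst hnn'
    rcases Nat.lt_or_ge n 2 with hn2 | hn2
    · -- n = 1 : γ is simple
      have hn1 : n = 1 := by omega
      subst hn1
      obtain ⟨c, hc⟩ := hγ.2
      have hsum : ∑ a ∈ Δ, c a = 1 := by
        have h1 : f γ = ((∑ a ∈ Δ, c a : ℕ) : ℝ) := by
          rw [hc, map_sum]
          push_cast
          refine Finset.sum_congr rfl fun a haΔ => ?_
          rw [map_smul, hf a haΔ]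
          simp
        rw [hfγ] at h1
        exact_mod_cast h1.symm
      obtain ⟨a₀, ha₀Δ, ha₀⟩ : ∃ a₀ ∈ Δ, c a₀ ≠ 0 := by
        by_contra hcon
        push_neg at hcon
        rw [Finset.sum_eq_zero (fun a ha => hcon a ha)] at hsum
        omega
      have hc1 : c a₀ = 1 := by
        have hle : c a₀ ≤ ∑ a ∈ Δ, c a :=
          Finset.single_le_sum (fun a _ => Nat.zero_le (c a)) ha₀Δ
        omega
      have hrest : ∀ b ∈ Δ, b ≠ a₀ → c b = 0 := by
        intro b hbΔ hb
        have h2 : ∑ a ∈ Δ.erase a₀, c a = 0 := by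
          have := Finset.add_sum_erase Δ c ha₀Δ
          omega
        have := (Finset.sum_eq_zero_iff).mp h2 b (Finset.mem_erase.mpr ⟨hb, hbΔ⟩)
        exact this
      have hγa₀ : γ = a₀ := by
        rw [hc, Finset.sum_eq_single_of_mem a₀ ha₀Δ
          (fun b hbΔ hb => by rw [hrest b hbΔ hb]; simp), hc1]
        simp
      refine ⟨[rE γ], ?_, by simp, by simp⟩
      intro t ht
      simp at ht
      rw [ht, hγa₀]
      exact rE_mem_simple ha₀Δ
    · -- n ≥ 2 : inductive step
      -- find a simple root with positive inner product with γ
      obtain ⟨a, haΔ, hpos⟩ : ∃ a ∈ Δ, (0:ℝ) < ⟪a, γ⟫ := by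
        by_contra hcon
        push_neg at hcon
        obtain ⟨c, hc⟩ := hγ.2
        have : ⟪γ, γ⟫ ≤ 0 := by
          nth_rewrite 1 [hc]
          rw [sum_inner]
          apply Finset.sum_nonpos
          intro a haΔ
          rw [real_inner_smul_left]
          exact mul_nonpos_of_nonneg_of_nonpos (by positivity) (hcon a haΔ)
        linarith [root_ipos hΦ hγΦ]
      have haΦ : a ∈ Φ := hΔ.1 haΔ
      have ha0 : a ≠ 0 := root_ne_zero hΦ haΦ
      have hfa : f a = 1 := hf a haΔ
      have hγa : γ ≠ a := by
        intro h
        rw [h, hfa] at hfγ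
        have : n = 1 := by exact_mod_cast hfγ.symm
        omega
      have hγa' : γ ≠ -a := by
        intro h
        rw [h, map_neg, hfa] at hfγ
        have : ((-1 : ℤ):ℝ) = (n:ℝ) := by push_cast; linarith
        have : (-1 : ℤ) = (n:ℤ) := by exact_mod_cast this
        omega
      obtain ⟨m, hmv, hmabs⟩ := pairing_bound hΦ hγΦ haΦ (hmin a haΦ) hγa hγa'
      have hcpos : (0:ℝ) < 2 * ⟪a, γ⟫ / ⟪a, a⟫ :=
        div_pos (by linarith) (root_ipos hΦ haΦ)
      have hm1 : m = 1 := by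
        have : (0:ℝ) < (m:ℝ) := hmv ▸ hcpos
        have hm0 : 0 < m := by exact_mod_cast this
        have := abs_le.mp hmabs
        omega
      have hc1 : 2 * ⟪a, γ⟫ / ⟪a, a⟫ = 1 := by rw [hmv, hm1]; norm_num
      set γ' := rE a γ with hγ'def
      have hγ'Φ : γ' ∈ Φ := rE_root_mem hΦ haΦ hγΦ
      have hfγ' : f γ' = (n:ℝ) - 1 := by
        rw [hγ'def, rE_apply, map_sub, map_smul, smul_eq_mul, hfa, mul_one, hc1, hfγ]
      have hγ'pos : γ' ∈ posRoots Φ Δ := by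
        obtain ⟨k, hk, hk0, hkpos⟩ := f_root_int hΦ hΔ f hf hγ'Φ
        apply hkpos
        have : (k:ℝ) = (n:ℝ) - 1 := by rw [← hk, hfγ']
        have hkval : k = (n:ℤ) - 1 := by exact_mod_cast this
        omega
      have hγ'norm : ∀ b ∈ Φ, ⟪γ', γ'⟫ ≤ ⟪b, b⟫ := by
        intro b hb
        rw [hγ'def, rE_inner]
        exact hmin b hb
      have hfγ'n : f γ' = ((n - 1 : ℕ) : ℝ) := by
        rw [hfγ']
        push_cast [Nat.cast_sub (by omega : 1 ≤ n)]
        ring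
      obtain ⟨L', hL's, hL'l, hL'p⟩ :=
        ih (n - 1) (by omega) γ' hγ'pos hγ'norm hfγ'n
      refine ⟨rE a :: (L' ++ [rE a]), ?_, ?_, ?_⟩
      · intro t ht
        rcases List.mem_cons.mp ht with rfl | ht'
        · exact rE_mem_simple haΔ
        · rcases List.mem_append.mp ht' with h | h
          · exact hL's t h
          · simp at h
            rw [h]
            exact rE_mem_simple haΔ
      · simp [List.length_append, hL'l]
        omega
      · rw [List.prod_cons, List.prod_append, List.prod_singleton, hL'p]
        have h1 : rE a * (rE γ' * rE a) = rE a * rE γ' * rE a := by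
          rw [mul_assoc]
        rw [h1, rE_conj a γ']
        congr 1
        rw [hγ'def]
        exact rE_rE a γ

end Upper

/-- For a positive short root `β` (squared length smaller than the
maximal value `r`), the reflection `s_β` has length `l(s_β) = 2·ht(β) − 1`, where the
height is computed by the linear functional `f` taking the value `1` on each simple
root. -/
theorem length_reflection_short (Φ : Set V) (hΦ : IsIrredRootSystem Φ)
    (Δ : Finset V) (hΔ : IsBase Φ Δ)
    (r : ℝ) (hr : IsGreatest {x : ℝ | ∃ α ∈ Φ, x = ⟪α, α⟫} r)
    (f : V →ₗ[ℝ] ℝ) (hf : ∀ a ∈ Δ, f a = 1)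
    (β : V) (hβ : β ∈ posRoots Φ Δ) (hβsh : ⟪β, β⟫ ≠ r)
    (s : V ≃ₗ[ℝ] V) (hs : ∀ v, s v = v - (2 * ⟪β, v⟫ / ⟪β, β⟫) • β) :
    (len Δ s : ℝ) = 2 * f β - 1 := by
  have hβΦ : β ∈ Φ := hβ.1
  have hβ0 : β ≠ 0 := root_ne_zero hΦ hβΦ
  have hseq : s = rE β := LinearEquiv.ext fun v => by rw [hs v, rE_apply]
  have hmin : ∀ a ∈ Φ, ⟪β, β⟫ ≤ ⟪a, a⟫ := short_min hΦ hβΦ hr hβsh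
  obtain ⟨n, hnpos, hfβ⟩ := f_pos_root hΦ hΔ f hf hβ
  -- upper bound word
  obtain ⟨L₀, hL₀s, hL₀l, hL₀p⟩ := upper_key hΦ hΔ f hf n β hβ hmin hfβ
  set S : Set ℕ := {k | ∃ L : List (V ≃ₗ[ℝ] V),
    (∀ t ∈ L, t ∈ simpleReflections Δ) ∧ L.length = k ∧ L.prod = s} with hSdef
  have hmemS : (2 * n - 1) ∈ S := ⟨L₀, hL₀s, hL₀l, by rw [hL₀p, hseq]⟩
  have hlen_eq : len Δ s = sInf S := rfl
  have hub : len Δ s ≤ 2 * n - 1 := by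
    rw [hlen_eq]; exact Nat.sInf_le hmemS
  have hne : S.Nonempty := ⟨2 * n - 1, hmemS⟩
  obtain ⟨L, hLs, hLl, hLp⟩ := Nat.sInf_mem hne
  -- lower bound
  have hsβ : L.prod β = -β := by
    rw [hLp, hseq, rE_self hβ0]
  have hfneg : f (L.prod β) < 0 := by
    rw [hsβ, map_neg, hfβ]
    simp
    exact_mod_cast hnpos
  have hlow := (lower_key hΦ hΔ f hf hβΦ hmin L hLs).1 hfneg
  rw [hsβ, map_neg, hfβ, hLl] at hlow
  have hlb : 2 * n - 1 ≤ len Δ s := by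
    rw [hlen_eq]
    have h1 : ((2 * n - 1 : ℕ) : ℝ) ≤ ((sInf S : ℕ) : ℝ) := by
      push_cast [Nat.cast_sub (by omega : 1 ≤ 2 * n)]
      linarith
    exact_mod_cast h1
  have hfinal : len Δ s = 2 * n - 1 := le_antisymm hub hlb
  rw [hfinal, hfβ]
  push_cast [Nat.cast_sub (by omega : 1 ≤ 2 * n)]
  ring
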